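/- In the Savage setting with pure risk, let ≿ be a preference relation on 𝒳 satisfying Axioms (M), (RC), (SRM), and (C), and let γ be a certainty-equivalent statistic such that X ≿ Y ⇔ γ(X_#P) ≥ γ(Y_#P) for all X, Y ∈ 𝒳(G). Then ≿ satisfies Property (WRD) — for all comonotonic X, Y ∈ 𝒳(G) with X ∼ Y and all λ ∈ [0,1], λX + (1−λ)Y ≿ X — if and only if γ is comonotonic quasiconcave. -/

import Mathlib

open MeasureTheory Filter Topology

noncomputable section

/-- Bounded measurable real-valued functions with respect to the σ-algebra `m`. -/
def BddMeas {Ω : Type*} (m : MeasurableSpace Ω) (X : Ω → ℝ) : Prop :=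
  @Measurable Ω ℝ m _ X ∧ ∃ M : ℝ, ∀ ω, |X ω| ≤ M

/-- A capacity on a measurable space. -/
def IsCapacity {Ω : Type*} (m : MeasurableSpace Ω) (ν : Set Ω → ℝ) : Prop :=
  ν ∅ = 0 ∧ ν Set.univ = 1 ∧
    ∀ A B : Set Ω, @MeasurableSet Ω m A → @MeasurableSet Ω m B → A ⊆ B → ν A ≤ ν B

/-- A continuous capacity: continuous along increasing and decreasing sequences. -/
def IsContinuousCapacity {Ω : Type*} (m : MeasurableSpace Ω) (ν : Set Ω → ℝ) : Prop :=
  IsCapacity m ν ∧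
    (∀ A : ℕ → Set Ω, (∀ n, @MeasurableSet Ω m (A n)) → Monotone A →
      Filter.Tendsto (fun n => ν (A n)) Filter.atTop (nhds (ν (⋃ n, A n)))) ∧
    (∀ A : ℕ → Set Ω, (∀ n, @MeasurableSet Ω m (A n)) → Antitone A →
      Filter.Tendsto (fun n => ν (A n)) Filter.atTop (nhds (ν (⋂ n, A n))))

/-- Supermodularity of a capacity. -/
def Supermodular {Ω : Type*} (m : MeasurableSpace Ω) (ν : Set Ω → ℝ) : Prop :=
  ∀ A B : Set Ω, @MeasurableSet Ω m A → @MeasurableSet Ω m B →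
    ν A + ν B ≤ ν (A ∪ B) + ν (A ∩ B)

/-- A distribution: a compactly supported Borel probability measure on ℝ. -/
def IsDistribution (Q : Measure ℝ) : Prop :=
  IsProbabilityMeasure Q ∧ ∃ a b : ℝ, Q (Set.Icc a b) = 1

/-- `FSDle P Q` means `Q ≥_fsd P` (first-order stochastic dominance). -/
def FSDle (P Q : Measure ℝ) : Prop := ∀ x : ℝ, P (Set.Ioi x) ≤ Q (Set.Ioi x)

/-- Weak convergence of a sequence of Borel measures on ℝ. -/
def WeakConv (Qn : ℕ → Measure ℝ) (Q : Measure ℝ) : Prop :=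
  ∀ f : BoundedContinuousFunction ℝ ℝ,
    Filter.Tendsto (fun n => ∫ x, f x ∂(Qn n)) Filter.atTop (nhds (∫ x, f x ∂Q))

/-- A statistic: strictly fsd-monotone and compactly continuous functional on distributions. -/
def IsStatistic (γ : Measure ℝ → ℝ) : Prop :=
  (∀ Q P : Measure ℝ, IsDistribution Q → IsDistribution P → FSDle P Q → γ P ≤ γ Q) ∧
  (∀ Q P : Measure ℝ, IsDistribution Q → IsDistribution P → FSDle P Q → Q ≠ P → γ P < γ Q) ∧
  (∀ (Qn : ℕ → Measure ℝ) (Q : Measure ℝ), (∀ n, IsDistribution (Qn n)) → IsDistribution Q →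
    (∃ a b : ℝ, ∀ n, Qn n (Set.Icc a b) = 1) → WeakConv Qn Q →
    Filter.Tendsto (fun n => γ (Qn n)) Filter.atTop (nhds (γ Q)))

/-- A certainty-equivalent statistic. -/
def IsCEStatistic (γ : Measure ℝ → ℝ) : Prop :=
  IsStatistic γ ∧ ∀ c : ℝ, γ (MeasureTheory.Measure.dirac c) = c

/-- `D` is the Choquet act-to-distribution mapping associated with the capacity `ν`. -/
def IsChoquetATD {Ω : Type*} (m : MeasurableSpace Ω) (ν : Set Ω → ℝ)
    (D : (Ω → ℝ) → Measure ℝ) : Prop :=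
  ∀ X : Ω → ℝ, BddMeas m X →
    IsDistribution (D X) ∧ ∀ x : ℝ, (D X (Set.Ioi x)).toReal = ν {ω | x < X ω}

/-- The ν-quantile of `X` at level `α`. -/
def capQuantile {Ω : Type*} (ν : Set Ω → ℝ) (X : Ω → ℝ) (α : ℝ) : ℝ :=
  sInf {x : ℝ | ν {ω | x < X ω} < 1 - α}

/-- The quantile function of a distribution. -/
def distQuantile (Q : Measure ℝ) (α : ℝ) : ℝ :=
  sInf {x : ℝ | (Q (Set.Ioi x)).toReal < 1 - α}

/-- Comonotonic pairs of functions. -/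
def Comonotonic {Ω : Type*} (X Y : Ω → ℝ) : Prop :=
  ∀ s s' : Ω, 0 ≤ (X s - X s') * (Y s - Y s')

/-- Real-valued indicator function of a set. -/
def ind {Ω : Type*} (A : Set Ω) : Ω → ℝ := A.indicator fun _ => 1

/-- Atomlessness of `P` in the sense of the paper. -/
def AtomlessOn {Ω : Type*} (G : MeasurableSpace Ω) (P : @Measure Ω G) : Prop :=
  ∀ A : Set Ω, @MeasurableSet Ω G A → ∀ r : ENNReal, r ≤ P A →
    ∃ B : Set Ω, @MeasurableSet Ω G B ∧ B ⊆ A ∧ P B = r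

/-- A capacity is risk conforming if it coincides with `P` on `G`. -/
def RiskConforming {Ω : Type*} (G : MeasurableSpace Ω) (P : @Measure Ω G)
    (ν : Set Ω → ℝ) : Prop :=
  ∀ A : Set Ω, @MeasurableSet Ω G A → ν A = (P A).toReal

/-- A preference relation: a total preorder on the bounded `m`-measurable functions. -/
def TotalPreorderOn {Ω : Type*} (m : MeasurableSpace Ω)
    (pref : (Ω → ℝ) → (Ω → ℝ) → Prop) : Prop :=
  (∀ X Y, BddMeas m X → BddMeas m Y → pref X Y ∨ pref Y X) ∧
  (∀ X Y Z, BddMeas m X → BddMeas m Y → BddMeas m Z → pref X Y → pref Y Z → pref X Z)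

/-- Axiom (M): monotonicity. -/
def AxiomM {Ω : Type*} (m : MeasurableSpace Ω) (pref : (Ω → ℝ) → (Ω → ℝ) → Prop) : Prop :=
  ∀ X Y, BddMeas m X → BddMeas m Y → (∀ ω, Y ω ≤ X ω) → pref X Y

/-- Axiom (RC): risk conformity. -/
def AxiomRC {Ω : Type*} (G : MeasurableSpace Ω) (P : @Measure Ω G)
    (pref : (Ω → ℝ) → (Ω → ℝ) → Prop) : Prop :=
  ∀ X Y, BddMeas G X → BddMeas G Y →
    (∀ x : ℝ, P {ω | x < X ω} = P {ω | x < Y ω}) → pref X Y ∧ pref Y X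

/-- Axiom (SRM): strict risk monotonicity. -/
def AxiomSRM {Ω : Type*} (G : MeasurableSpace Ω) (P : @Measure Ω G)
    (pref : (Ω → ℝ) → (Ω → ℝ) → Prop) : Prop :=
  ∀ X Y, BddMeas G X → BddMeas G Y →
    P {ω | Y ω ≤ X ω} = 1 → 0 < P {ω | Y ω < X ω} → pref X Y ∧ ¬ pref Y X

/-- Axiom (C): continuity (B-closedness of upper and lower contour sets). -/
def AxiomC {Ω : Type*} (m : MeasurableSpace Ω) (pref : (Ω → ℝ) → (Ω → ℝ) → Prop) : Prop :=
  ∀ X, BddMeas m X → ∀ (Yn : ℕ → Ω → ℝ) (Y : Ω → ℝ),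
    (∀ n, BddMeas m (Yn n)) → BddMeas m Y →
    (∃ M : ℝ, ∀ n ω, |Yn n ω| ≤ M) →
    (∀ ω, Filter.Tendsto (fun n => Yn n ω) Filter.atTop (nhds (Y ω))) →
    ((∀ n, pref X (Yn n)) → pref X Y) ∧ ((∀ n, pref (Yn n) X) → pref Y X)

/-- Axiom (CD): cumulative dominance. -/
def AxiomCD {Ω : Type*} (m : MeasurableSpace Ω) (pref : (Ω → ℝ) → (Ω → ℝ) → Prop) : Prop :=
  ∀ X Y, BddMeas m X → BddMeas m Y →
    (∀ x : ℝ, pref (ind {ω | x < X ω}) (ind {ω | x < Y ω}) ∧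
       pref (ind {ω | x < Y ω}) (ind {ω | x < X ω})) →
    pref X Y ∧ pref Y X

/-- `SSDle P Q` means `Q ≥_ssd P` (second-order stochastic dominance). -/
def SSDle (P Q : Measure ℝ) : Prop :=
  ∀ f : ℝ → ℝ, Monotone f → ConcaveOn ℝ Set.univ f → ∫ x, f x ∂P ≤ ∫ x, f x ∂Q

/-- Comonotonic quasiconcavity of a statistic. -/
def ComonotonicQuasiconcave (γ : Measure ℝ → ℝ) : Prop :=
  ∀ Q P R : Measure ℝ, IsDistribution Q → IsDistribution P → IsDistribution R →
    ∀ l : ℝ, 0 ≤ l → l ≤ 1 →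
    (∀ β : ℝ, 0 < β → β < 1 →
      distQuantile R β = l * distQuantile Q β + (1 - l) * distQuantile P β) →
    min (γ Q) (γ P) ≤ γ R

/-- Exactness of a capacity. -/
def ExactCapacity {Ω : Type*} (m : MeasurableSpace Ω) (ν : Set Ω → ℝ) : Prop :=
  ∀ A : Set Ω, @MeasurableSet Ω m A →
    ∃ μ : @Measure Ω m, @IsProbabilityMeasure Ω m μ ∧
      (∀ B : Set Ω, @MeasurableSet Ω m B → ν B ≤ (μ B).toReal) ∧ (μ A).toReal = ν A

section Dev
open Set

variable {Ω : Type*}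

/-- abstract quantile -/
def qtl (s : ℝ → ℝ) (β : ℝ) : ℝ := sInf {x : ℝ | s x < 1 - β}

/-- survival function of a random variable -/
def svP (G : MeasurableSpace Ω) (P : @MeasureTheory.Measure Ω G) (W : Ω → ℝ) : ℝ → ℝ :=
  fun x => (P {ω | x < W ω}).toReal

lemma sv_antitone {G : MeasurableSpace Ω} (P : @MeasureTheory.Measure Ω G)
    (hfin : ∀ s : Set Ω, P s ≠ ⊤) (W : Ω → ℝ) : Antitone (svP G P W) := by
  intro x y hxy
  exact ENNReal.toReal_le_toReal (hfin _) (hfin _) |>.mpr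
    (MeasureTheory.measure_mono (fun ω hω => lt_of_le_of_lt hxy hω))

lemma sv_eq_one {G : MeasurableSpace Ω} (P : @MeasureTheory.Measure Ω G)
    (hP : @MeasureTheory.IsProbabilityMeasure Ω G P) (W : Ω → ℝ) (M : ℝ)
    (hWb : ∀ ω, |W ω| ≤ M) {x : ℝ} (hx : x < -M) : svP G P W x = 1 := by
  have : {ω | x < W ω} = Set.univ := by
    ext ω; simp only [Set.mem_setOf_eq, Set.mem_univ, iff_true]
    have := (abs_le.mp (hWb ω)).1; linarith
  simp [svP, this, hP.measure_univ]

lemma sv_eq_zero {G : MeasurableSpace Ω} (P : @MeasureTheory.Measure Ω G)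
    (W : Ω → ℝ) (M : ℝ) (hWb : ∀ ω, |W ω| ≤ M) {x : ℝ} (hx : M ≤ x) : svP G P W x = 0 := by
  have : {ω | x < W ω} = (∅ : Set Ω) := by
    ext ω; simp only [Set.mem_setOf_eq, Set.mem_empty_iff_false, iff_false, not_lt]
    exact le_trans ((abs_le.mp (hWb ω)).2) hx
  simp [svP, this]

lemma sv_nonneg {G : MeasurableSpace Ω} (P : @MeasureTheory.Measure Ω G) (W : Ω → ℝ) (x : ℝ) :
    0 ≤ svP G P W x := ENNReal.toReal_nonneg

lemma sv_le_one {G : MeasurableSpace Ω} (P : @MeasureTheory.Measure Ω G)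
    (hP : @MeasureTheory.IsProbabilityMeasure Ω G P) (W : Ω → ℝ) (x : ℝ) :
    svP G P W x ≤ 1 := by
  have h := MeasureTheory.prob_le_one (μ := P) (s := {ω | x < W ω})
  have : (P {ω | x < W ω}).toReal ≤ (1 : ENNReal).toReal :=
    ENNReal.toReal_le_toReal (MeasureTheory.measure_ne_top _ _) (by simp) |>.mpr h
  simpa [svP] using this

section qtlfacts
variable {s : ℝ → ℝ} {β : ℝ}

lemma qtl_le_of (hbdd : BddBelow {x : ℝ | s x < 1 - β}) {x : ℝ} (h : s x < 1 - β) :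
    qtl s β ≤ x := csInf_le hbdd h

lemma le_qtl_of (hne : {x : ℝ | s x < 1 - β}.Nonempty) {x : ℝ}
    (h : ∀ y, s y < 1 - β → x ≤ y) : x ≤ qtl s β := le_csInf hne h

lemma lt_of_qtl_lt (hs : Antitone s) (hne : {x : ℝ | s x < 1 - β}.Nonempty) {x : ℝ}
    (h : qtl s β < x) : s x < 1 - β := by
  obtain ⟨y, hy, hyx⟩ := exists_lt_of_csInf_lt hne h
  exact lt_of_le_of_lt (hs hyx.le) hy

lemma ge_of_lt_qtl (hbdd : BddBelow {x : ℝ | s x < 1 - β}) {x : ℝ}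
    (h : x < qtl s β) : 1 - β ≤ s x := by
  by_contra hc
  exact absurd (qtl_le_of hbdd (lt_of_not_ge hc)) (not_le.mpr h)

end qtlfacts

/-- nonemptiness and boundedness of the quantile-defining set for bounded rvs -/
lemma sv_set_nonempty {G : MeasurableSpace Ω} (P : @MeasureTheory.Measure Ω G)
    (W : Ω → ℝ) (M : ℝ) (hWb : ∀ ω, |W ω| ≤ M) {β : ℝ} (hβ1 : β < 1) :
    {x : ℝ | svP G P W x < 1 - β}.Nonempty := by
  refine ⟨M, ?_⟩
  simp only [Set.mem_setOf_eq, sv_eq_zero P W M hWb le_rfl]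
  linarith

lemma sv_set_bddBelow {G : MeasurableSpace Ω} (P : @MeasureTheory.Measure Ω G)
    (hP : @MeasureTheory.IsProbabilityMeasure Ω G P)
    (W : Ω → ℝ) (M : ℝ) (hWb : ∀ ω, |W ω| ≤ M) {β : ℝ} (hβ0 : 0 < β) :
    BddBelow {x : ℝ | svP G P W x < 1 - β} := by
  refine ⟨-M, fun x hx => ?_⟩
  by_contra hc
  rw [Set.mem_setOf_eq, sv_eq_one P hP W M hWb (lt_of_not_ge hc)] at hx
  linarith

lemma qtl_mem_Icc {G : MeasurableSpace Ω} (P : @MeasureTheory.Measure Ω G)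
    (hP : @MeasureTheory.IsProbabilityMeasure Ω G P)
    (W : Ω → ℝ) (M : ℝ) (hWb : ∀ ω, |W ω| ≤ M) {β : ℝ} (hβ0 : 0 < β) (hβ1 : β < 1) :
    qtl (svP G P W) β ∈ Set.Icc (-M) M := by
  constructor
  · refine le_qtl_of (sv_set_nonempty P W M hWb hβ1) (fun y hy => ?_)
    by_contra hc
    rw [sv_eq_one P hP W M hWb (lt_of_not_ge hc)] at hy
    linarith
  · refine qtl_le_of (sv_set_bddBelow P hP W M hWb hβ0) ?_
    rw [sv_eq_zero P W M hWb le_rfl]; linarith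

/-- comonotonic functions have nested upper level sets -/
lemma comonotone_nested {X Y : Ω → ℝ} (hcom : Comonotonic X Y) (a b : ℝ) :
    {ω | b < Y ω} ⊆ {ω | a < X ω} ∨ {ω | a < X ω} ⊆ {ω | b < Y ω} := by
  by_contra hc
  push_neg at hc
  obtain ⟨h1, h2⟩ := hc
  rw [Set.not_subset] at h1 h2
  obtain ⟨ω₁, hω₁Y, hω₁X⟩ := h1
  obtain ⟨ω₂, hω₂X, hω₂Y⟩ := h2
  simp only [Set.mem_setOf_eq, not_lt] at hω₁Y hω₁X hω₂X hω₂Y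
  have := hcom ω₂ ω₁
  nlinarith

end Dev
section Dev2
open Set

variable {Ω : Type*}

lemma abs_combo_le {X Y : Ω → ℝ} {M : ℝ} (hXb : ∀ ω, |X ω| ≤ M) (hYb : ∀ ω, |Y ω| ≤ M)
    {l : ℝ} (hl0 : 0 ≤ l) (hl1 : l ≤ 1) (ω : Ω) : |l * X ω + (1 - l) * Y ω| ≤ M := by
  have h1 := abs_le.mp (hXb ω); have h2 := abs_le.mp (hYb ω)
  rw [abs_le]
  constructor <;> nlinarith [h1.1, h1.2, h2.1, h2.2]

lemma qtl_comonotone_add {G : MeasurableSpace Ω} (P : @MeasureTheory.Measure Ω G)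
    (hP : @MeasureTheory.IsProbabilityMeasure Ω G P)
    (X Y : Ω → ℝ) (M : ℝ) (hXb : ∀ ω, |X ω| ≤ M) (hYb : ∀ ω, |Y ω| ≤ M)
    (hcom : Comonotonic X Y) (l : ℝ) (hl0 : 0 ≤ l) (hl1 : l ≤ 1)
    {β : ℝ} (hβ0 : 0 < β) (hβ1 : β < 1) :
    qtl (svP G P (fun ω => l * X ω + (1 - l) * Y ω)) β
      = l * qtl (svP G P X) β + (1 - l) * qtl (svP G P Y) β := by
  haveI := hP
  have hfin : ∀ s : Set Ω, P s ≠ ⊤ := fun s => MeasureTheory.measure_ne_top P s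
  set Z : Ω → ℝ := fun ω => l * X ω + (1 - l) * Y ω with hZ
  have hZb : ∀ ω, |Z ω| ≤ M := abs_combo_le hXb hYb hl0 hl1
  set qX := qtl (svP G P X) β
  set qY := qtl (svP G P Y) β
  set c := l * qX + (1 - l) * qY with hc
  have hXne := sv_set_nonempty P X M hXb hβ1
  have hYne := sv_set_nonempty P Y M hYb hβ1
  have hZne := sv_set_nonempty P Z M hZb hβ1
  have hXbdd := sv_set_bddBelow P hP X M hXb hβ0
  have hYbdd := sv_set_bddBelow P hP Y M hYb hβ0
  have hZbdd := sv_set_bddBelow P hP Z M hZb hβ0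
  have hXanti := sv_antitone P hfin X
  have hYanti := sv_antitone P hfin Y
  have hZanti := sv_antitone P hfin Z
  apply le_antisymm
  · -- qtl Z ≤ c
    apply le_of_forall_pos_le_add
    intro ε hε
    have hXe : svP G P X (qX + ε) < 1 - β := lt_of_qtl_lt hXanti hXne (by linarith)
    have hYe : svP G P Y (qY + ε) < 1 - β := lt_of_qtl_lt hYanti hYne (by linarith)
    have hsub : {ω | c + ε < Z ω} ⊆ {ω | qX + ε < X ω} ∪ {ω | qY + ε < Y ω} := by
      intro ω hω
      simp only [Set.mem_setOf_eq, Set.mem_union] at hω ⊢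
      by_contra hcon
      push_neg at hcon
      have h1 : l * X ω ≤ l * (qX + ε) := mul_le_mul_of_nonneg_left hcon.1 hl0
      have h2 : (1 - l) * Y ω ≤ (1 - l) * (qY + ε) :=
        mul_le_mul_of_nonneg_left hcon.2 (by linarith)
      have : Z ω ≤ c + ε := by simp only [hZ, hc]; nlinarith
      linarith
    have key : svP G P Z (c + ε) < 1 - β := by
      rcases comonotone_nested hcom (qX + ε) (qY + ε) with hn | hn
      · have hsub' : {ω | c + ε < Z ω} ⊆ {ω | qX + ε < X ω} := by
          intro ω hω
          rcases hsub hω with h | h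
          · exact h
          · exact hn h
        calc svP G P Z (c + ε) ≤ svP G P X (qX + ε) :=
              ENNReal.toReal_le_toReal (hfin _) (hfin _) |>.mpr (MeasureTheory.measure_mono hsub')
          _ < 1 - β := hXe
      · have hsub' : {ω | c + ε < Z ω} ⊆ {ω | qY + ε < Y ω} := by
          intro ω hω
          rcases hsub hω with h | h
          · exact hn h
          · exact h
        calc svP G P Z (c + ε) ≤ svP G P Y (qY + ε) :=
              ENNReal.toReal_le_toReal (hfin _) (hfin _) |>.mpr (MeasureTheory.measure_mono hsub')
          _ < 1 - β := hYe
    have := qtl_le_of hZbdd key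
    linarith
  · -- c ≤ qtl Z
    apply le_of_forall_pos_le_add
    intro ε hε
    have hXl : 1 - β ≤ svP G P X (qX - ε) := ge_of_lt_qtl hXbdd (by linarith)
    have hYl : 1 - β ≤ svP G P Y (qY - ε) := ge_of_lt_qtl hYbdd (by linarith)
    have hsub : {ω | qX - ε < X ω} ∩ {ω | qY - ε < Y ω} ⊆ {ω | c - ε < Z ω} := by
      intro ω hω
      obtain ⟨h1, h2⟩ := hω
      simp only [Set.mem_setOf_eq] at h1 h2 ⊢
      simp only [hZ, hc]
      by_cases hl : 0 < l
      · have := mul_lt_mul_of_pos_left h1 hl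
        have h2' : (1 - l) * (qY - ε) ≤ (1 - l) * Y ω :=
          mul_le_mul_of_nonneg_left h2.le (by linarith)
        nlinarith
      · have hl' : l = 0 := le_antisymm (not_lt.mp hl) hl0
        simp only [hl']; nlinarith
    have key : 1 - β ≤ svP G P Z (c - ε) := by
      rcases comonotone_nested hcom (qX - ε) (qY - ε) with hn | hn
      · have hsub' : {ω | qY - ε < Y ω} ⊆ {ω | c - ε < Z ω} := fun ω hω => hsub ⟨hn hω, hω⟩
        calc (1:ℝ) - β ≤ svP G P Y (qY - ε) := hYl
          _ ≤ svP G P Z (c - ε) :=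
            ENNReal.toReal_le_toReal (hfin _) (hfin _) |>.mpr (MeasureTheory.measure_mono hsub')
      · have hsub' : {ω | qX - ε < X ω} ⊆ {ω | c - ε < Z ω} := fun ω hω => hsub ⟨hω, hn hω⟩
        calc (1:ℝ) - β ≤ svP G P X (qX - ε) := hXl
          _ ≤ svP G P Z (c - ε) :=
            ENNReal.toReal_le_toReal (hfin _) (hfin _) |>.mpr (MeasureTheory.measure_mono hsub')
    have : c - ε ≤ qtl (svP G P Z) β := by
      refine le_qtl_of hZne (fun y hy => ?_)
      by_contra hcy
      have : svP G P Z (c - ε) ≤ svP G P Z y := hZanti (le_of_not_ge hcy |>.trans le_rfl)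
      linarith
    linarith

end Dev2
section Dev3
open Set MeasureTheory

variable {Ω : Type*}

/-- real survival function of a measure on ℝ -/
def svM (Q : Measure ℝ) : ℝ → ℝ := fun x => (Q (Set.Ioi x)).toReal

lemma distQuantile_eq_qtl (Q : Measure ℝ) (β : ℝ) : distQuantile Q β = qtl (svM Q) β := rfl

lemma map_Ioi {G : MeasurableSpace Ω} (P : @Measure Ω G) {W : Ω → ℝ}
    (hW : @Measurable Ω ℝ G _ W) (x : ℝ) :
    (@Measure.map Ω ℝ G _ W P) (Set.Ioi x) = P {ω | x < W ω} := by
  rw [Measure.map_apply hW measurableSet_Ioi]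
  rfl

lemma svM_map_eq {G : MeasurableSpace Ω} (P : @Measure Ω G) {W : Ω → ℝ}
    (hW : @Measurable Ω ℝ G _ W) :
    svM (@Measure.map Ω ℝ G _ W P) = svP G P W := by
  funext x
  rw [svM, map_Ioi P hW]
  rfl

lemma distQuantile_map_eq {G : MeasurableSpace Ω} (P : @Measure Ω G) {W : Ω → ℝ}
    (hW : @Measurable Ω ℝ G _ W) (β : ℝ) :
    distQuantile (@Measure.map Ω ℝ G _ W P) β = qtl (svP G P W) β := by
  rw [distQuantile_eq_qtl, svM_map_eq P hW]

lemma isDistribution_map {G : MeasurableSpace Ω} (P : @Measure Ω G)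
    (hP : @IsProbabilityMeasure Ω G P) {W : Ω → ℝ} (hW : BddMeas G W) :
    IsDistribution (@Measure.map Ω ℝ G _ W P) := by
  haveI := hP
  obtain ⟨hWm, M, hM⟩ := hW
  constructor
  · exact Measure.isProbabilityMeasure_map hWm.aemeasurable
  · refine ⟨-M, M, ?_⟩
    rw [Measure.map_apply hWm measurableSet_Icc]
    have : W ⁻¹' (Set.Icc (-M) M) = Set.univ := by
      ext ω; simp only [Set.mem_preimage, Set.mem_Icc, Set.mem_univ, iff_true]
      exact abs_le.mp (hM ω)
    rw [this]
    exact measure_univ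

section distFacts
variable {Q : Measure ℝ} {a b : ℝ}

lemma supp_Ioi_zero (hQ : IsProbabilityMeasure Q) (hab : Q (Set.Icc a b) = 1)
    {x : ℝ} (hx : b ≤ x) : Q (Set.Ioi x) = 0 := by
  have hsub : Set.Ioi x ⊆ (Set.Icc a b)ᶜ := by
    intro y hy
    simp only [Set.mem_compl_iff, Set.mem_Icc, not_and, not_le]
    intro _
    exact lt_of_le_of_lt hx hy
  have : Q ((Set.Icc a b)ᶜ) = 0 := by
    rw [measure_compl measurableSet_Icc (measure_ne_top _ _), hab, measure_univ, tsub_self]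
  exact le_antisymm (le_trans (measure_mono hsub) this.le) zero_le

lemma supp_Ioi_one (hQ : IsProbabilityMeasure Q) (hab : Q (Set.Icc a b) = 1)
    {x : ℝ} (hx : x < a) : Q (Set.Ioi x) = 1 := by
  have hsub : Set.Icc a b ⊆ Set.Ioi x := fun y hy => lt_of_lt_of_le hx hy.1
  exact le_antisymm prob_le_one (hab ▸ measure_mono hsub)

lemma supp_le (hQ : IsProbabilityMeasure Q) (hab : Q (Set.Icc a b) = 1) : a ≤ b := by
  by_contra hc
  rw [Set.Icc_eq_empty (lt_of_not_ge hc).not_ge] at hab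
  simp at hab

lemma svM_antitone (hQ : IsProbabilityMeasure Q) : Antitone (svM Q) := by
  intro x y hxy
  exact ENNReal.toReal_le_toReal (measure_ne_top _ _) (measure_ne_top _ _) |>.mpr
    (measure_mono (Set.Ioi_subset_Ioi hxy))

lemma svM_nonneg (x : ℝ) : 0 ≤ svM Q x := ENNReal.toReal_nonneg

lemma svM_le_one (hQ : IsProbabilityMeasure Q) (x : ℝ) : svM Q x ≤ 1 := by
  have h : Q (Set.Ioi x) ≤ 1 := prob_le_one
  have := ENNReal.toReal_le_toReal (measure_ne_top _ _) (by simp : (1:ENNReal) ≠ ⊤) |>.mpr h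
  simpa [svM] using this

lemma svM_set_nonempty (hQ : IsProbabilityMeasure Q) (hab : Q (Set.Icc a b) = 1)
    {β : ℝ} (hβ1 : β < 1) : {x : ℝ | svM Q x < 1 - β}.Nonempty := by
  refine ⟨b, ?_⟩
  simp only [Set.mem_setOf_eq, svM, supp_Ioi_zero hQ hab le_rfl]
  simpa using by linarith

lemma svM_set_bddBelow (hQ : IsProbabilityMeasure Q) (hab : Q (Set.Icc a b) = 1)
    {β : ℝ} (hβ0 : 0 ≤ β) : BddBelow {x : ℝ | svM Q x < 1 - β} := by
  refine ⟨a, fun x hx => ?_⟩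
  by_contra hc
  rw [Set.mem_setOf_eq, svM, supp_Ioi_one hQ hab (lt_of_not_ge hc)] at hx
  simp at hx
  linarith

lemma qtlM_mem_Icc (hQ : IsProbabilityMeasure Q) (hab : Q (Set.Icc a b) = 1)
    {β : ℝ} (hβ0 : 0 ≤ β) (hβ1 : β < 1) : distQuantile Q β ∈ Set.Icc a b := by
  rw [distQuantile_eq_qtl]
  constructor
  · refine le_qtl_of (svM_set_nonempty hQ hab hβ1) (fun y hy => ?_)
    by_contra hc
    rw [svM, supp_Ioi_one hQ hab (lt_of_not_ge hc)] at hy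
    simp at hy; linarith
  · refine qtl_le_of (svM_set_bddBelow hQ hab hβ0) ?_
    rw [svM, supp_Ioi_zero hQ hab le_rfl]
    simpa using by linarith

/-- right continuity of the survival function -/
lemma svM_right_cont (hQ : IsProbabilityMeasure Q) {x m : ℝ} (hm0 : 0 ≤ m)
    (h : m < svM Q x) : ∃ x' : ℝ, x < x' ∧ m < svM Q x' := by
  have hunion : Set.Ioi x = ⋃ n : ℕ, Set.Ioi (x + 1 / (n + 1)) := by
    ext y
    simp only [Set.mem_Ioi, Set.mem_iUnion]
    constructor
    · intro hy
      obtain ⟨n, hn⟩ := exists_nat_one_div_lt (sub_pos.mpr hy)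
      exact ⟨n, by linarith⟩
    · rintro ⟨n, hn⟩
      have : (0:ℝ) < 1 / (n + 1) := by positivity
      linarith
  have hdir : Directed (fun x1 x2 : Set ℝ => x1 ⊆ x2) (fun n : ℕ => Set.Ioi (x + 1 / (n + 1))) := by
    apply Monotone.directed_le
    intro i j hij
    apply Set.Ioi_subset_Ioi
    have : (1:ℝ) / (j + 1) ≤ 1 / (i + 1) := by
      apply one_div_le_one_div_of_le (by positivity)
      exact_mod_cast by omega
    linarith
  have hiSup : Q (Set.Ioi x) = ⨆ n : ℕ, Q (Set.Ioi (x + 1 / (n + 1))) := by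
    rw [hunion]; exact hdir.measure_iUnion
  have hofm : ENNReal.ofReal m < Q (Set.Ioi x) := by
    rw [← ENNReal.ofReal_toReal (measure_ne_top Q _)]
    exact ENNReal.ofReal_lt_ofReal_iff_of_nonneg hm0 |>.mpr h
  rw [hiSup, lt_iSup_iff] at hofm
  obtain ⟨n, hn⟩ := hofm
  refine ⟨x + 1 / (n + 1), lt_add_of_pos_right x (by positivity), ?_⟩
  have := ENNReal.ofReal_lt_ofReal_iff_of_nonneg hm0 |>.mp
    (by rwa [ENNReal.ofReal_toReal (measure_ne_top Q _)])
  exact this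

/-- equal quantiles imply equal survival functions -/
lemma svM_le_of_qtl_eq {Q₁ Q₂ : Measure ℝ} {a b : ℝ}
    (hQ₁ : IsProbabilityMeasure Q₁) (hQ₂ : IsProbabilityMeasure Q₂)
    (hab₁ : Q₁ (Set.Icc a b) = 1) (hab₂ : Q₂ (Set.Icc a b) = 1)
    (h : ∀ β : ℝ, 0 < β → β < 1 → distQuantile Q₁ β = distQuantile Q₂ β) (x : ℝ) :
    svM Q₁ x ≤ svM Q₂ x := by
  by_contra hc
  push_neg at hc
  set m := (svM Q₂ x + svM Q₁ x) / 2 with hm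
  have hm2 : svM Q₂ x < m := by rw [hm]; linarith
  have hm1 : m < svM Q₁ x := by rw [hm]; linarith
  have hm0 : 0 ≤ m := le_trans (svM_nonneg x) hm2.le
  have hmlt1 : m < 1 := lt_of_lt_of_le hm1 (svM_le_one hQ₁ x)
  set β := 1 - m with hβ
  have hβ0 : 0 < β := by rw [hβ]; linarith
  have hβ1 : β < 1 := by
    rw [hβ]
    have : 0 < m := lt_of_le_of_lt (svM_nonneg x) hm2
    linarith
  have h1mβ : 1 - β = m := by rw [hβ]; ring
  -- Q₂ : quantile ≤ x
  have hq2 : distQuantile Q₂ β ≤ x := by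
    rw [distQuantile_eq_qtl]
    exact qtl_le_of (svM_set_bddBelow hQ₂ hab₂ hβ0.le) (by rw [h1mβ]; exact hm2)
  -- Q₁ : quantile > x
  obtain ⟨x', hx', hmx'⟩ := svM_right_cont hQ₁ hm0 hm1
  have hq1 : x' ≤ distQuantile Q₁ β := by
    rw [distQuantile_eq_qtl]
    refine le_qtl_of (svM_set_nonempty hQ₁ hab₁ hβ1) (fun y hy => ?_)
    rw [h1mβ] at hy
    by_contra hcy
    have : svM Q₁ x' ≤ svM Q₁ y := svM_antitone hQ₁ (le_of_not_ge hcy)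
    linarith
  have := h β hβ0 hβ1
  linarith

lemma measure_Ioi_eq_of_qtl_eq {Q₁ Q₂ : Measure ℝ} {a b : ℝ}
    (hQ₁ : IsProbabilityMeasure Q₁) (hQ₂ : IsProbabilityMeasure Q₂)
    (hab₁ : Q₁ (Set.Icc a b) = 1) (hab₂ : Q₂ (Set.Icc a b) = 1)
    (h : ∀ β : ℝ, 0 < β → β < 1 → distQuantile Q₁ β = distQuantile Q₂ β) (x : ℝ) :
    Q₁ (Set.Ioi x) = Q₂ (Set.Ioi x) := by
  have h1 := svM_le_of_qtl_eq hQ₁ hQ₂ hab₁ hab₂ h x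
  have h2 := svM_le_of_qtl_eq hQ₂ hQ₁ hab₂ hab₁ (fun β hβ0 hβ1 => (h β hβ0 hβ1).symm) x
  have : svM Q₁ x = svM Q₂ x := le_antisymm h1 h2
  rw [svM, svM] at this
  exact (ENNReal.toReal_eq_toReal_iff' (measure_ne_top _ _) (measure_ne_top _ _)).mp this

lemma measure_ext_Ioi {Q₁ Q₂ : Measure ℝ}
    (hQ₁ : IsProbabilityMeasure Q₁) (hQ₂ : IsProbabilityMeasure Q₂)
    (h : ∀ x, Q₁ (Set.Ioi x) = Q₂ (Set.Ioi x)) : Q₁ = Q₂ := by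
  haveI := hQ₁; haveI := hQ₂
  apply Measure.ext_of_Iic
  intro x
  have h1 : Q₁ (Set.Iic x) = 1 - Q₁ (Set.Ioi x) := by
    rw [← Set.compl_Ioi, measure_compl measurableSet_Ioi (measure_ne_top _ _), measure_univ]
  have h2 : Q₂ (Set.Iic x) = 1 - Q₂ (Set.Ioi x) := by
    rw [← Set.compl_Ioi, measure_compl measurableSet_Ioi (measure_ne_top _ _), measure_univ]
  rw [h1, h2, h]

end distFacts

/-- shifting: quantile of a translated measure -/
lemma csInf_shift (T : Set ℝ) (hne : T.Nonempty) (hbdd : BddBelow T) (c : ℝ) :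
    sInf {x : ℝ | x + c ∈ T} = sInf T - c := by
  obtain ⟨m, hm⟩ := hbdd
  have hbddS : BddBelow {x : ℝ | x + c ∈ T} := by
    refine ⟨m - c, fun x hx => ?_⟩
    have := hm hx
    linarith
  have hneS : {x : ℝ | x + c ∈ T}.Nonempty := by
    obtain ⟨t, ht⟩ := hne
    exact ⟨t - c, by simp only [Set.mem_setOf_eq, sub_add_cancel]; exact ht⟩
  apply le_antisymm
  · have : sInf {x : ℝ | x + c ∈ T} + c ≤ sInf T := by
      refine le_csInf hne (fun y hy => ?_)
      have hyc : y - c ∈ {x : ℝ | x + c ∈ T} := by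
        simp only [Set.mem_setOf_eq, sub_add_cancel]; exact hy
      have := csInf_le hbddS hyc
      linarith
    linarith
  · refine le_csInf hneS (fun x hx => ?_)
    have := csInf_le ⟨m, hm⟩ hx
    linarith

end Dev3
section Dev4
open Set MeasureTheory

variable {Ω : Type*}

lemma shiftM_Ioi (Q : Measure ℝ) (c x : ℝ) :
    (Measure.map (fun y => y - c) Q) (Set.Ioi x) = Q (Set.Ioi (x + c)) := by
  have hm : Measurable (fun y : ℝ => y - c) := by fun_prop
  rw [Measure.map_apply hm measurableSet_Ioi]
  congr 1
  ext y
  simp only [Set.mem_preimage, Set.mem_Ioi]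
  constructor <;> intro h <;> linarith

lemma shiftM_isDistribution {Q : Measure ℝ} {a b : ℝ} (hQ : IsProbabilityMeasure Q)
    (hab : Q (Set.Icc a b) = 1) (c : ℝ) :
    IsDistribution (Measure.map (fun y => y - c) Q) := by
  haveI := hQ
  have hm : Measurable (fun y : ℝ => y - c) := by fun_prop
  refine ⟨Measure.isProbabilityMeasure_map hm.aemeasurable, a - c, b - c, ?_⟩
  rw [Measure.map_apply hm measurableSet_Icc]
  have : (fun y : ℝ => y - c) ⁻¹' (Set.Icc (a - c) (b - c)) = Set.Icc a b := by
    ext y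
    simp only [Set.mem_preimage, Set.mem_Icc]
    constructor <;> intro h <;> constructor <;> linarith [h.1, h.2]
  rw [this, hab]

lemma shiftM_quantile {Q : Measure ℝ} {a b : ℝ} (hQ : IsProbabilityMeasure Q)
    (hab : Q (Set.Icc a b) = 1) (c : ℝ) {β : ℝ} (hβ0 : 0 < β) (hβ1 : β < 1) :
    distQuantile (Measure.map (fun y => y - c) Q) β = distQuantile Q β - c := by
  have hset : {x : ℝ | svM (Measure.map (fun y => y - c) Q) x < 1 - β}
      = {x : ℝ | x + c ∈ {z : ℝ | svM Q z < 1 - β}} := by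
    ext x
    simp only [Set.mem_setOf_eq, svM, shiftM_Ioi]
  rw [distQuantile_eq_qtl, distQuantile_eq_qtl, qtl, qtl, hset]
  exact csInf_shift _ (svM_set_nonempty hQ hab hβ1) (svM_set_bddBelow hQ hab hβ0.le) c

lemma shiftM_FSDle {Q : Measure ℝ} {c : ℝ} (hc : 0 ≤ c) :
    FSDle (Measure.map (fun y => y - c) Q) Q := by
  intro x
  rw [shiftM_Ioi]
  exact measure_mono (Set.Ioi_subset_Ioi (by linarith))

/-- the backward direction: comonotonic quasiconcavity implies WRD -/
lemma wrd_of_cqc {G : MeasurableSpace Ω} (P : @Measure Ω G)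
    (hP : @IsProbabilityMeasure Ω G P)
    (pref : (Ω → ℝ) → (Ω → ℝ) → Prop) (γ : Measure ℝ → ℝ)
    (hrep : ∀ X Y : Ω → ℝ, BddMeas G X → BddMeas G Y →
      (pref X Y ↔ γ (@Measure.map Ω ℝ G _ Y P) ≤ γ (@Measure.map Ω ℝ G _ X P)))
    (hcqc : ComonotonicQuasiconcave γ)
    (X Y : Ω → ℝ) (hX : BddMeas G X) (hY : BddMeas G Y) (hcom : Comonotonic X Y)
    (hXY : pref X Y) (hYX : pref Y X) (l : ℝ) (hl0 : 0 ≤ l) (hl1 : l ≤ 1) :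
    pref (fun ω => l * X ω + (1 - l) * Y ω) X := by
  obtain ⟨M₁, hM₁⟩ := hX.2
  obtain ⟨M₂, hM₂⟩ := hY.2
  set M := max M₁ M₂ with hM
  have hXb : ∀ ω, |X ω| ≤ M := fun ω => le_trans (hM₁ ω) (le_max_left _ _)
  have hYb : ∀ ω, |Y ω| ≤ M := fun ω => le_trans (hM₂ ω) (le_max_right _ _)
  set Z : Ω → ℝ := fun ω => l * X ω + (1 - l) * Y ω with hZdef
  have hZ : BddMeas G Z :=
    ⟨((hX.1.const_mul l).add (hY.1.const_mul (1 - l))), M, abs_combo_le hXb hYb hl0 hl1⟩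
  have hγeq : γ (@Measure.map Ω ℝ G _ X P) = γ (@Measure.map Ω ℝ G _ Y P) :=
    le_antisymm (((hrep Y X hY hX).mp hYX)) (((hrep X Y hX hY).mp hXY))
  rw [hrep Z X hZ hX]
  have hmin := hcqc (@Measure.map Ω ℝ G _ X P) (@Measure.map Ω ℝ G _ Y P)
    (@Measure.map Ω ℝ G _ Z P)
    (isDistribution_map P hP hX) (isDistribution_map P hP hY) (isDistribution_map P hP hZ)
    l hl0 hl1 ?_
  · rw [hγeq, min_self] at hmin
    rw [hγeq]
    exact hmin
  · intro β hβ0 hβ1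
    rw [distQuantile_map_eq P hX.1, distQuantile_map_eq P hY.1, distQuantile_map_eq P hZ.1]
    exact qtl_comonotone_add P hP X Y M hXb hYb hcom l hl0 hl1 hβ0 hβ1

end Dev4
section Dev5
open Set MeasureTheory

variable {Ω : Type*}

/-- clamped target value -/
def tgtR (q : ℚ) : ℝ := max 0 (min (q : ℝ) 1)

lemma tgtR_nonneg (q : ℚ) : 0 ≤ tgtR q := le_max_left _ _

lemma tgtR_le_one (q : ℚ) : tgtR q ≤ 1 := max_le (by norm_num) (min_le_right _ _)

lemma tgtR_mono : Monotone tgtR := by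
  intro q r hqr
  unfold tgtR
  have : (q:ℝ) ≤ (r:ℝ) := by exact_mod_cast hqr
  exact max_le_max le_rfl (min_le_min this le_rfl)

lemma tgtR_of_mem {q : ℚ} (h0 : 0 ≤ q) (h1 : q ≤ 1) : tgtR q = (q : ℝ) := by
  unfold tgtR
  rw [min_eq_left (by exact_mod_cast h1), max_eq_right (by exact_mod_cast h0)]

/-- invariant for the chain construction -/
def GoodChain (G : MeasurableSpace Ω) (P : @Measure Ω G) (e : ℕ → ℚ) (n : ℕ)
    (f : ℕ → Set Ω) : Prop :=
  ∀ i, i < n → (MeasurableSet[G] (f i) ∧ P (f i) = ENNReal.ofReal (tgtR (e i)) ∧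
    ∀ j, j < n → e j ≤ e i → f j ⊆ f i)

lemma chain_extend {G : MeasurableSpace Ω} (P : @Measure Ω G)
    (hP : @IsProbabilityMeasure Ω G P) (hatom : AtomlessOn G P)
    (e : ℕ → ℚ) (he : Function.Injective e) (f : ℕ → Set Ω) (n : ℕ)
    (hf : GoodChain G P e n f) :
    ∃ B : Set Ω, GoodChain G P e (n + 1) (Function.update f n B) := by
  classical
  haveI := hP
  -- lower bracket
  obtain ⟨Alo, tlo, htlo0, htlole, hAlom, hAloP, hAlosub, hAloup⟩ :
      ∃ (Alo : Set Ω) (tlo : ℝ), 0 ≤ tlo ∧ tlo ≤ tgtR (e n) ∧ MeasurableSet[G] Alo ∧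
        P Alo = ENNReal.ofReal tlo ∧ (∀ j, j < n → e j < e n → f j ⊆ Alo) ∧
        (∀ j, j < n → e n < e j → Alo ⊆ f j) := by
    by_cases hL : ∃ j, j < n ∧ e j < e n
    · obtain ⟨j₀, hj₀n, hj₀⟩ := hL
      obtain ⟨jm, hjmmem, hjmmax⟩ := Finset.exists_max_image
        ((Finset.range n).filter fun j => e j < e n) e
        ⟨j₀, by simp [hj₀n, hj₀]⟩
      simp only [Finset.mem_filter, Finset.mem_range] at hjmmem
      obtain ⟨hjmn, hjmlt⟩ := hjmmem
      obtain ⟨hm, hPm, hsubm⟩ := hf jm hjmn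
      refine ⟨f jm, tgtR (e jm), tgtR_nonneg _, tgtR_mono hjmlt.le, hm, hPm, ?_, ?_⟩
      · intro j hj hje
        exact hsubm j hj (hjmmax j (by simp [hj, hje]))
      · intro j hj hje
        exact (hf j hj).2.2 jm hjmn (le_of_lt (lt_trans hjmlt hje))
    · push_neg at hL
      refine ⟨∅, 0, le_rfl, tgtR_nonneg _, MeasurableSet.empty, by simp, ?_, ?_⟩
      · intro j hj hje
        exact absurd hje (not_lt.mpr (hL j hj))
      · intro j hj hje
        exact Set.empty_subset _
  -- upper bracket
  obtain ⟨Ahi, thi, hthile, hAhim, hAhiP, hAhisup, hAhiup⟩ :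
      ∃ (Ahi : Set Ω) (thi : ℝ), tgtR (e n) ≤ thi ∧ MeasurableSet[G] Ahi ∧
        P Ahi = ENNReal.ofReal thi ∧ Alo ⊆ Ahi ∧
        (∀ j, j < n → e n < e j → Ahi ⊆ f j) := by
    by_cases hU : ∃ j, j < n ∧ e n < e j
    · obtain ⟨j₀, hj₀n, hj₀⟩ := hU
      obtain ⟨jm, hjmmem, hjmmin⟩ := Finset.exists_min_image
        ((Finset.range n).filter fun j => e n < e j) e
        ⟨j₀, by simp [hj₀n, hj₀]⟩
      simp only [Finset.mem_filter, Finset.mem_range] at hjmmem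
      obtain ⟨hjmn, hjmlt⟩ := hjmmem
      obtain ⟨hm, hPm, _⟩ := hf jm hjmn
      refine ⟨f jm, tgtR (e jm), tgtR_mono hjmlt.le, hm, hPm, hAloup jm hjmn hjmlt, ?_⟩
      · intro j hj hje
        exact (hf j hj).2.2 jm hjmn (hjmmin j (by simp [hj, hje]))
    · push_neg at hU
      refine ⟨Set.univ, 1, tgtR_le_one _, MeasurableSet.univ, by simp, Set.subset_univ _, ?_⟩
      intro j hj hje
      exact absurd hje (not_lt.mpr (hU j hj))
  -- construct the new set
  have hdiffm : MeasurableSet[G] (Ahi \ Alo) := hAhim.diff hAlom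
  have hPdiff : P (Ahi \ Alo) = ENNReal.ofReal (thi - tlo) := by
    rw [measure_diff hAhisup hAlom.nullMeasurableSet (by rw [hAloP]; exact ENNReal.ofReal_ne_top),
      hAhiP, hAloP, ← ENNReal.ofReal_sub _ htlo0]
  have hr : ENNReal.ofReal (tgtR (e n) - tlo) ≤ P (Ahi \ Alo) := by
    rw [hPdiff]; exact ENNReal.ofReal_le_ofReal (by linarith)
  obtain ⟨C, hCm, hCsub, hCP⟩ := hatom (Ahi \ Alo) hdiffm _ hr
  refine ⟨Alo ∪ C, ?_⟩
  have hBm : MeasurableSet[G] (Alo ∪ C) := hAlom.union hCm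
  have hdisj : Disjoint Alo C := by
    rw [Set.disjoint_left]
    intro ω hω hωC
    exact (hCsub hωC).2 hω
  have hBP : P (Alo ∪ C) = ENNReal.ofReal (tgtR (e n)) := by
    rw [measure_union hdisj hCm, hAloP, hCP,
      ← ENNReal.ofReal_add htlo0 (by linarith : (0:ℝ) ≤ tgtR (e n) - tlo)]
    norm_num
  have hBsubhi : Alo ∪ C ⊆ Ahi := Set.union_subset hAhisup (hCsub.trans Set.diff_subset)
  intro i hi
  rcases Nat.lt_succ_iff_lt_or_eq.mp hi with hin | hieq
  · have hne : i ≠ n := Nat.ne_of_lt hin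
    obtain ⟨hm, hPm, hsubm⟩ := hf i hin
    rw [Function.update_of_ne hne]
    refine ⟨hm, hPm, ?_⟩
    intro j hj hje
    rcases Nat.lt_succ_iff_lt_or_eq.mp hj with hjn | hjeq
    · rw [Function.update_of_ne (Nat.ne_of_lt hjn)]
      exact hsubm j hjn hje
    · subst hjeq
      rw [Function.update_self]
      have hlt : e j < e i := lt_of_le_of_ne hje (fun hEq => hne (he hEq).symm)
      exact Set.union_subset (hAloup i hin hlt) ((hCsub.trans Set.diff_subset).trans
        (hAhiup i hin hlt))
  · subst hieq
    rw [Function.update_self]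
    refine ⟨hBm, hBP, ?_⟩
    intro j hj hje
    rcases Nat.lt_succ_iff_lt_or_eq.mp hj with hjn | hjeq
    · rw [Function.update_of_ne (Nat.ne_of_lt hjn)]
      have hjlt : e j < e i := lt_of_le_of_ne hje (fun hEq => (Nat.ne_of_lt hjn) (he hEq))
      exact (hAlosub j hjn hjlt).trans Set.subset_union_left
    · subst hjeq
      rw [Function.update_self]

/-- the recursively constructed chain -/
def chainAux {G : MeasurableSpace Ω} (P : @Measure Ω G)
    (hP : @IsProbabilityMeasure Ω G P) (hatom : AtomlessOn G P)
    (e : ℕ → ℚ) (he : Function.Injective e) : (n : ℕ) → {f : ℕ → Set Ω // GoodChain G P e n f}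
  | 0 => ⟨fun _ => ∅, fun i hi => absurd hi (Nat.not_lt_zero i)⟩
  | n + 1 =>
    let p := chainAux P hP hatom e he n
    let h := chain_extend P hP hatom e he p.1 n p.2
    ⟨Function.update p.1 n h.choose, h.choose_spec⟩

lemma chainAux_coherent {G : MeasurableSpace Ω} (P : @Measure Ω G)
    (hP : @IsProbabilityMeasure Ω G P) (hatom : AtomlessOn G P)
    (e : ℕ → ℚ) (he : Function.Injective e) :
    ∀ n i, i < n → (chainAux P hP hatom e he n).1 i = (chainAux P hP hatom e he (i+1)).1 i := by
  intro n
  induction n with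
  | zero => intro i hi; exact absurd hi (Nat.not_lt_zero i)
  | succ n ih =>
    intro i hi
    rcases Nat.lt_succ_iff_lt_or_eq.mp hi with hin | hieq
    · have : (chainAux P hP hatom e he (n+1)).1 i = (chainAux P hP hatom e he n).1 i := by
        show (Function.update (chainAux P hP hatom e he n).1 n _) i = _
        rw [Function.update_of_ne (Nat.ne_of_lt hin)]
      rw [this]
      exact ih i hin
    · subst hieq
      rfl

end Dev5
section Dev6
open Set MeasureTheory

variable {Ω : Type*}

lemma exists_rat_chain {G : MeasurableSpace Ω} (P : @Measure Ω G)
    (hP : @IsProbabilityMeasure Ω G P) (hatom : AtomlessOn G P) :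
    ∃ c : ℚ → Set Ω, (∀ q, MeasurableSet[G] (c q)) ∧ (∀ q r : ℚ, q ≤ r → c q ⊆ c r) ∧
      (∀ q : ℚ, P (c q) = ENNReal.ofReal (tgtR q)) := by
  set e : ℕ → ℚ := fun n => (Denumerable.eqv ℚ).symm n with hedef
  have he : Function.Injective e := (Denumerable.eqv ℚ).symm.injective
  set A : ℕ → Set Ω := fun i => (chainAux P hP hatom e he (i+1)).1 i with hAdef
  have hA : ∀ i, MeasurableSet[G] (A i) ∧ P (A i) = ENNReal.ofReal (tgtR (e i)) := by
    intro i
    have h := (chainAux P hP hatom e he (i+1)).2 i (Nat.lt_succ_self i)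
    exact ⟨h.1, h.2.1⟩
  have hAsub : ∀ i j, e j ≤ e i → A j ⊆ A i := by
    intro i j hje
    set n := max i j + 1 with hn
    have hin : i < n := by omega
    have hjn : j < n := by omega
    have h := ((chainAux P hP hatom e he n).2 i hin).2.2 j hjn hje
    rwa [chainAux_coherent P hP hatom e he n i hin,
      chainAux_coherent P hP hatom e he n j hjn] at h
  refine ⟨fun q => A ((Denumerable.eqv ℚ) q), fun q => (hA _).1, ?_, ?_⟩
  · intro q r hqr
    apply hAsub
    rw [hedef]
    simp only [Equiv.symm_apply_apply]
    exact hqr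
  · intro q
    rw [(hA _).2, hedef]
    simp only [Equiv.symm_apply_apply]

/-- existence of a uniform random variable -/
lemma exists_uniform {G : MeasurableSpace Ω} (P : @Measure Ω G)
    (hP : @IsProbabilityMeasure Ω G P) (hatom : AtomlessOn G P) :
    ∃ U : Ω → ℝ, (@Measurable Ω ℝ G _ U) ∧ (∀ ω, U ω ∈ Set.Icc (0:ℝ) 1) ∧
      (∀ t : ℝ, 0 ≤ t → t ≤ 1 → P {ω | t < U ω} = ENNReal.ofReal (1 - t)) ∧
      (∀ t : ℝ, 0 ≤ t → t ≤ 1 → P {ω | t ≤ U ω} = ENNReal.ofReal (1 - t)) := by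
  haveI := hP
  obtain ⟨c, hcm, hcmono, hcP⟩ := exists_rat_chain P hP hatom
  classical
  set S : Ω → Set ℝ := fun ω => insert (1:ℝ) {x | ∃ q : ℚ, 0 ≤ q ∧ q ≤ 1 ∧ ω ∈ c q ∧ x = (q:ℝ)}
    with hSdef
  have hSne : ∀ ω, (S ω).Nonempty := fun ω => ⟨1, Set.mem_insert _ _⟩
  have hSbdd : ∀ ω, BddBelow (S ω) := by
    intro ω
    refine ⟨0, fun x hx => ?_⟩
    rcases hx with h1 | ⟨q, hq0, _, _, hq⟩
    · rw [h1]; norm_num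
    · rw [hq]; exact_mod_cast hq0
  set U : Ω → ℝ := fun ω => sInf (S ω) with hUdef
  have hU0 : ∀ ω, 0 ≤ U ω := fun ω => le_csInf (hSne ω) (fun x hx => by
    rcases hx with h1 | ⟨q, hq0, _, _, hq⟩
    · rw [h1]; norm_num
    · rw [hq]; exact_mod_cast hq0)
  have hU1 : ∀ ω, U ω ≤ 1 := fun ω => csInf_le (hSbdd ω) (Set.mem_insert _ _)
  -- the sublevel set identity for t ≤ 1
  have hlev : ∀ t : ℝ, t ≤ 1 → {ω | U ω < t}
      = ⋃ q : {q : ℚ // 0 ≤ q ∧ q ≤ 1 ∧ (q:ℝ) < t}, c q.1 := by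
    intro t ht
    ext ω
    simp only [Set.mem_setOf_eq, Set.mem_iUnion]
    constructor
    · intro hω
      obtain ⟨x, hxS, hxt⟩ := (csInf_lt_iff (hSbdd ω) (hSne ω)).mp hω
      rcases hxS with h1 | ⟨q, hq0, hq1, hqc, hq⟩
      · rw [h1] at hxt; linarith
      · exact ⟨⟨q, hq0, hq1, hq ▸ hxt⟩, hqc⟩
    · rintro ⟨⟨q, hq0, hq1, hqt⟩, hωc⟩
      calc U ω ≤ (q:ℝ) := csInf_le (hSbdd ω)
            (Set.mem_insert_iff.mpr (Or.inr ⟨q, hq0, hq1, hωc, rfl⟩))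
        _ < t := hqt
  have hlevuniv : ∀ t : ℝ, 1 < t → {ω | U ω < t} = Set.univ := by
    intro t ht
    ext ω
    simp only [Set.mem_setOf_eq, Set.mem_univ, iff_true]
    exact lt_of_le_of_lt (hU1 ω) ht
  have hlevmeas : ∀ t : ℝ, MeasurableSet[G] {ω | U ω < t} := by
    intro t
    rcases le_or_gt t 1 with ht | ht
    · rw [hlev t ht]
      exact MeasurableSet.iUnion (fun q => hcm q.1)
    · rw [hlevuniv t ht]
      exact MeasurableSet.univ
  have hUmeas : @Measurable Ω ℝ G _ U := by
    apply measurable_of_Iio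
    intro x
    exact hlevmeas x
  -- measure of strict sublevel sets
  have hltP : ∀ t : ℝ, 0 ≤ t → P {ω | U ω < t} = ENNReal.ofReal (min t 1) := by
    intro t ht0
    rcases le_or_gt t 1 with ht | ht
    swap
    · rw [hlevuniv t ht, measure_univ, min_eq_right ht.le, ENNReal.ofReal_one]
    rw [min_eq_left ht]
    rcases eq_or_lt_of_le ht0 with ht0' | ht0'
    · have : {ω | U ω < t} = ∅ := by
        ext ω
        simp only [Set.mem_setOf_eq, Set.mem_empty_iff_false, iff_false, not_lt, ← ht0']
        exact hU0 ω
      rw [this]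
      simp [← ht0']
    apply le_antisymm
    · rw [hlev t ht]
      have hdir : Directed (fun x1 x2 : Set Ω => x1 ⊆ x2)
          (fun q : {q : ℚ // 0 ≤ q ∧ q ≤ 1 ∧ (q:ℝ) < t} => c q.1) := by
        intro q r
        refine ⟨⟨max q.1 r.1, ?_, ?_, ?_⟩, hcmono _ _ (le_max_left _ _),
          hcmono _ _ (le_max_right _ _)⟩
        · exact le_trans q.2.1 (le_max_left _ _)
        · exact max_le q.2.2.1 r.2.2.1
        · rcases max_cases q.1 r.1 with ⟨h, _⟩ | ⟨h, _⟩ <;> rw [h]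
          · exact q.2.2.2
          · exact r.2.2.2
      rw [hdir.measure_iUnion]
      refine iSup_le (fun q => ?_)
      rw [hcP q.1, tgtR_of_mem q.2.1 q.2.2.1]
      exact ENNReal.ofReal_le_ofReal q.2.2.2.le
    · -- approximate t from below by rationals
      have htend : Filter.Tendsto (fun n : ℕ => ENNReal.ofReal (t - 1 / (n + 1)))
          Filter.atTop (nhds (ENNReal.ofReal t)) := by
        apply ENNReal.continuous_ofReal.continuousAt.tendsto.comp
        have : Filter.Tendsto (fun n : ℕ => 1 / ((n:ℝ) + 1)) Filter.atTop (nhds 0) :=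
          tendsto_one_div_add_atTop_nhds_zero_nat
        have h2 := Filter.Tendsto.const_sub t this
        simpa using h2
      refine le_of_tendsto htend (Filter.Eventually.of_forall (fun n => ?_))
      obtain ⟨q, hq1, hq2⟩ := exists_rat_btwn (show max 0 (t - 1/(n+1)) < t by
        apply max_lt ht0'
        have : (0:ℝ) < 1 / (n+1) := by positivity
        linarith)
      have hq0 : 0 ≤ q := by
        have := le_max_left 0 (t - 1/(n+1))
        exact_mod_cast le_of_lt (lt_of_le_of_lt this hq1)
      have hqle1 : q ≤ 1 := by
        have : (q:ℝ) < 1 := lt_of_lt_of_le hq2 ht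
        exact_mod_cast this.le
      have hsub : c q ⊆ {ω | U ω < t} := by
        rw [hlev t ht]
        intro ω hω
        exact Set.mem_iUnion.mpr ⟨⟨q, hq0, hqle1, hq2⟩, hω⟩
      calc ENNReal.ofReal (t - 1/(n+1)) ≤ ENNReal.ofReal q := by
            apply ENNReal.ofReal_le_ofReal
            have := lt_of_le_of_lt (le_max_right 0 (t - 1/(n+1))) hq1
            exact this.le
        _ = P (c q) := by rw [hcP q, tgtR_of_mem hq0 hqle1]
        _ ≤ P {ω | U ω < t} := measure_mono hsub
  -- measure of weak sublevel sets
  have hleP : ∀ t : ℝ, 0 ≤ t → t ≤ 1 → P {ω | U ω ≤ t} = ENNReal.ofReal t := by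
    intro t ht0 ht1
    have hinter : {ω | U ω ≤ t} = ⋂ n : ℕ, {ω | U ω < t + 1 / (n + 1)} := by
      ext ω
      simp only [Set.mem_setOf_eq, Set.mem_iInter]
      constructor
      · intro h n
        have : (0:ℝ) < 1 / (n+1) := by positivity
        linarith
      · intro h
        by_contra hc
        obtain ⟨n, hn⟩ := exists_nat_one_div_lt (sub_pos.mpr (lt_of_not_ge hc))
        have := h n
        linarith
    rw [hinter]
    have hanti : Directed (fun x1 x2 : Set Ω => x1 ⊇ x2)
        (fun n : ℕ => {ω | U ω < t + 1 / (n + 1)}) := by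
      apply Antitone.directed_ge
      intro i j hij ω hω
      simp only [Set.mem_setOf_eq] at hω ⊢
      have : (1:ℝ) / (j+1) ≤ 1 / (i+1) := by
        apply one_div_le_one_div_of_le (by positivity)
        exact_mod_cast by omega
      linarith
    rw [Antitone.measure_iInter (s := fun n : ℕ => {ω | U ω < t + 1 / (n + 1)})
      (fun i j hij ω hω => by
        simp only [Set.mem_setOf_eq] at hω ⊢
        have hij' : (i:ℝ) ≤ j := by exact_mod_cast hij
        have : (1:ℝ) / (j+1) ≤ 1 / (i+1) := one_div_le_one_div_of_le (by positivity) (by linarith)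
        linarith)
      (fun n => (hlevmeas _).nullMeasurableSet) ⟨0, measure_ne_top _ _⟩]
    have hval : ∀ n : ℕ, P {ω | U ω < t + 1 / (n + 1)}
        = ENNReal.ofReal (min (t + 1 / (n + 1)) 1) := by
      intro n
      apply hltP
      have : (0:ℝ) < 1 / (n+1) := by positivity
      linarith
    simp_rw [hval]
    apply le_antisymm
    · have htend : Filter.Tendsto (fun n : ℕ => ENNReal.ofReal (min (t + 1 / (n + 1)) 1))
          Filter.atTop (nhds (ENNReal.ofReal (min t 1))) := by
        apply ENNReal.continuous_ofReal.continuousAt.tendsto.comp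
        have h1 : Filter.Tendsto (fun n : ℕ => t + 1 / ((n:ℝ) + 1)) Filter.atTop (nhds t) := by
          have := Filter.Tendsto.const_add t tendsto_one_div_add_atTop_nhds_zero_nat
          simpa using this
        exact Filter.Tendsto.min h1 tendsto_const_nhds
      rw [min_eq_left ht1] at htend
      exact ge_of_tendsto htend (Filter.Eventually.of_forall (fun n => iInf_le _ n))
    · refine le_iInf (fun n => ENNReal.ofReal_le_ofReal ?_)
      have : (0:ℝ) < 1 / (n+1) := by positivity
      rcases min_cases (t + 1/(n+1)) 1 with ⟨h, _⟩ | ⟨h, h'⟩ <;> rw [h] <;> linarith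
  -- conclude
  refine ⟨U, hUmeas, fun ω => ⟨hU0 ω, hU1 ω⟩, ?_, ?_⟩
  · intro t ht0 ht1
    have hcompl : {ω | t < U ω} = {ω | U ω ≤ t}ᶜ := by
      ext ω; simp [not_le]
    rw [hcompl, measure_compl ?_ (measure_ne_top _ _), measure_univ, hleP t ht0 ht1]
    · rw [← ENNReal.ofReal_one, ← ENNReal.ofReal_sub _ ht0]
    · -- measurability of {U ≤ t}
      have : {ω | U ω ≤ t} = U ⁻¹' (Set.Iic t) := rfl
      rw [this]
      exact hUmeas measurableSet_Iic
  · intro t ht0 ht1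
    have hcompl : {ω | t ≤ U ω} = {ω | U ω < t}ᶜ := by
      ext ω; simp [not_lt]
    rw [hcompl, measure_compl (hlevmeas t) (measure_ne_top _ _), measure_univ, hltP t ht0,
      min_eq_left ht1]
    rw [← ENNReal.ofReal_one, ← ENNReal.ofReal_sub _ ht0]

end Dev6
section Dev7
open Set MeasureTheory

variable {Ω : Type*}

lemma qtlM_mono {Q : Measure ℝ} {a b : ℝ} (hQ : IsProbabilityMeasure Q)
    (hab : Q (Set.Icc a b) = 1) {β β' : ℝ} (hβ0 : 0 ≤ β) (hββ' : β ≤ β') (hβ'1 : β' < 1) :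
    distQuantile Q β ≤ distQuantile Q β' := by
  rw [distQuantile_eq_qtl, distQuantile_eq_qtl]
  apply csInf_le_csInf (svM_set_bddBelow hQ hab hβ0) (svM_set_nonempty hQ hab hβ'1)
  intro x hx
  simp only [Set.mem_setOf_eq] at hx ⊢
  linarith

/-- monotone quantile-type function used for the inverse transform -/
def qfun (Q : Measure ℝ) (b : ℝ) : ℝ → ℝ :=
  fun u => if u < 1 then distQuantile Q (max u 0) else b

lemma qfun_mono {Q : Measure ℝ} {a b : ℝ} (hQ : IsProbabilityMeasure Q)
    (hab : Q (Set.Icc a b) = 1) : Monotone (qfun Q b) := by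
  intro u u' huu'
  unfold qfun
  rcases lt_or_ge u 1 with hu | hu
  · rcases lt_or_ge u' 1 with hu' | hu'
    · rw [if_pos hu, if_pos hu']
      exact qtlM_mono hQ hab (le_max_right _ _) (max_le_max huu' le_rfl)
        (by rw [max_lt_iff]; exact ⟨hu', by norm_num⟩)
    · rw [if_pos hu, if_neg (not_lt.mpr hu')]
      exact (qtlM_mem_Icc hQ hab (le_max_right u 0)
        (by rw [max_lt_iff]; exact ⟨hu, by norm_num⟩)).2
  · rw [if_neg (not_lt.mpr hu), if_neg (not_lt.mpr (le_trans hu huu'))]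

lemma qfun_mem_Icc {Q : Measure ℝ} {a b : ℝ} (hQ : IsProbabilityMeasure Q)
    (hab : Q (Set.Icc a b) = 1) (u : ℝ) : qfun Q b u ∈ Set.Icc a b := by
  unfold qfun
  rcases lt_or_ge u 1 with hu | hu
  · rw [if_pos hu]
    exact qtlM_mem_Icc hQ hab (le_max_right u 0) (by rw [max_lt_iff]; exact ⟨hu, by norm_num⟩)
  · rw [if_neg (not_lt.mpr hu)]
    exact ⟨supp_le hQ hab, le_rfl⟩

/-- the inverse transform: `qfun Q b ∘ U` has distribution `Q` -/
lemma transform_Ioi {G : MeasurableSpace Ω} (P : @Measure Ω G)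
    (hP : @IsProbabilityMeasure Ω G P)
    {U : Ω → ℝ} (hU01 : ∀ ω, U ω ∈ Set.Icc (0:ℝ) 1)
    (hUgt : ∀ t : ℝ, 0 ≤ t → t ≤ 1 → P {ω | t < U ω} = ENNReal.ofReal (1 - t))
    (hUge : ∀ t : ℝ, 0 ≤ t → t ≤ 1 → P {ω | t ≤ U ω} = ENNReal.ofReal (1 - t))
    {Q : Measure ℝ} {a b : ℝ} (hQ : IsProbabilityMeasure Q) (hab : Q (Set.Icc a b) = 1)
    (x : ℝ) : P {ω | x < qfun Q b (U ω)} = Q (Set.Ioi x) := by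
  haveI := hP
  set F : ℝ := 1 - svM Q x with hF
  have hsv0 : 0 ≤ svM Q x := svM_nonneg x
  have hsv1 : svM Q x ≤ 1 := svM_le_one hQ x
  have hF0 : 0 ≤ F := by rw [hF]; linarith
  have hF1 : F ≤ 1 := by rw [hF]; linarith
  have hlower : {ω | F < U ω} ⊆ {ω | x < qfun Q b (U ω)} := by
    intro ω hω
    simp only [Set.mem_setOf_eq] at hω ⊢
    have hU0 := (hU01 ω).1
    have hU1 := (hU01 ω).2
    have hsx : 1 - U ω < svM Q x := by rw [hF] at hω; linarith
    unfold qfun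
    rcases lt_or_ge (U ω) 1 with hu | hu
    · rw [if_pos hu, max_eq_left hU0]
      have hm0 : 0 ≤ 1 - U ω := by linarith
      obtain ⟨x', hx'gt, hx'⟩ := svM_right_cont hQ hm0 hsx
      rw [distQuantile_eq_qtl]
      refine lt_of_lt_of_le hx'gt (le_qtl_of (svM_set_nonempty hQ hab hu) (fun y hy => ?_))
      by_contra hcy
      have : svM Q x' ≤ svM Q y := svM_antitone hQ (le_of_not_ge hcy)
      linarith
    · rw [if_neg (not_lt.mpr hu)]
      by_contra hcb
      have hbx : b ≤ x := le_of_not_gt hcb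
      have : svM Q x = 0 := by rw [svM, supp_Ioi_zero hQ hab hbx]; simp
      have hU1' : U ω = 1 := le_antisymm hU1 hu
      rw [hU1', this] at hsx
      linarith
  have hupper : {ω | x < qfun Q b (U ω)} ⊆ {ω | F ≤ U ω} ∪ {ω | 1 ≤ U ω} := by
    intro ω hω
    simp only [Set.mem_setOf_eq, Set.mem_union] at hω ⊢
    have hU0 := (hU01 ω).1
    rcases lt_or_ge (U ω) 1 with hu | hu
    · left
      rw [qfun, if_pos hu, max_eq_left hU0, distQuantile_eq_qtl] at hω
      have := ge_of_lt_qtl (svM_set_bddBelow hQ hab hU0) hω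
      rw [hF]; linarith
    · right; exact hu
  have h1 : P {ω | F < U ω} = ENNReal.ofReal (svM Q x) := by
    rw [hUgt F hF0 hF1]; congr 1; rw [hF]; ring
  have h2 : P {ω | 1 ≤ U ω} = 0 := by
    rw [hUge 1 (by norm_num) le_rfl]; simp
  have hQx : Q (Set.Ioi x) = ENNReal.ofReal (svM Q x) := by
    rw [svM, ENNReal.ofReal_toReal (measure_ne_top _ _)]
  apply le_antisymm
  · calc P {ω | x < qfun Q b (U ω)} ≤ P ({ω | F ≤ U ω} ∪ {ω | 1 ≤ U ω}) := measure_mono hupper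
      _ ≤ P {ω | F ≤ U ω} + P {ω | 1 ≤ U ω} := measure_union_le _ _
      _ = ENNReal.ofReal (1 - F) + 0 := by rw [hUge F hF0 hF1, h2]
      _ = Q (Set.Ioi x) := by rw [add_zero, hQx]; congr 1; rw [hF]; ring
  · calc Q (Set.Ioi x) = P {ω | F < U ω} := by rw [h1, hQx]
      _ ≤ P {ω | x < qfun Q b (U ω)} := measure_mono hlower

/-- the shifted transform has the shifted distribution -/
lemma transform_map {G : MeasurableSpace Ω} (P : @Measure Ω G)
    (hP : @IsProbabilityMeasure Ω G P)
    {U : Ω → ℝ} (hUm : @Measurable Ω ℝ G _ U) (hU01 : ∀ ω, U ω ∈ Set.Icc (0:ℝ) 1)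
    (hUgt : ∀ t : ℝ, 0 ≤ t → t ≤ 1 → P {ω | t < U ω} = ENNReal.ofReal (1 - t))
    (hUge : ∀ t : ℝ, 0 ≤ t → t ≤ 1 → P {ω | t ≤ U ω} = ENNReal.ofReal (1 - t))
    {Q : Measure ℝ} {a b : ℝ} (hQ : IsProbabilityMeasure Q) (hab : Q (Set.Icc a b) = 1)
    (c : ℝ) :
    @Measure.map Ω ℝ G _ (fun ω => qfun Q b (U ω) - c) P = Measure.map (fun y => y - c) Q := by
  haveI := hP
  have hXm : @Measurable Ω ℝ G _ (fun ω => qfun Q b (U ω) - c) :=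
    ((qfun_mono hQ hab).measurable.comp hUm).sub_const c
  haveI h1 : IsProbabilityMeasure (@Measure.map Ω ℝ G _ (fun ω => qfun Q b (U ω) - c) P) :=
    Measure.isProbabilityMeasure_map hXm.aemeasurable
  haveI h2 : IsProbabilityMeasure (Measure.map (fun y => y - c) Q) :=
    Measure.isProbabilityMeasure_map (by fun_prop : Measurable (fun y : ℝ => y - c)).aemeasurable
  apply measure_ext_Ioi h1 h2
  intro x
  rw [map_Ioi P hXm, shiftM_Ioi]
  have : {ω | x < qfun Q b (U ω) - c} = {ω | x + c < qfun Q b (U ω)} := by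
    ext ω; simp only [Set.mem_setOf_eq]; constructor <;> intro h <;> linarith
  rw [this, transform_Ioi P hP hU01 hUgt hUge hQ hab]

end Dev7
section Dev8
open Set MeasureTheory Filter Topology

lemma supp_mono {Q : Measure ℝ} {a b a' b' : ℝ} (hQ : IsProbabilityMeasure Q)
    (hab : Q (Set.Icc a b) = 1) (ha : a' ≤ a) (hb : b ≤ b') : Q (Set.Icc a' b') = 1 :=
  le_antisymm prob_le_one (hab ▸ measure_mono (Set.Icc_subset_Icc ha hb))

lemma abs_le_of_mem_Icc {x l r : ℝ} (h : x ∈ Set.Icc l r) : |x| ≤ max |l| |r| := by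
  rw [abs_le]
  constructor
  · calc -(max |l| |r|) ≤ -|l| := by simp [le_max_left]
      _ ≤ l := neg_abs_le l
      _ ≤ x := h.1
  · calc x ≤ r := h.2
      _ ≤ |r| := le_abs_self r
      _ ≤ max |l| |r| := le_max_right _ _

lemma gamma_shift_continuous (γ : Measure ℝ → ℝ) (hγ : IsStatistic γ)
    {Q : Measure ℝ} {a b : ℝ} (hQ : IsProbabilityMeasure Q) (hab : Q (Set.Icc a b) = 1) :
    Continuous (fun c : ℝ => γ (Measure.map (fun y => y - c) Q)) := by
  haveI := hQ
  rw [continuous_iff_continuousAt]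
  intro c₀
  rw [ContinuousAt, tendsto_iff_seq_tendsto]
  intro u hu
  -- bound on the sequence
  have hbdd : ∃ K : ℝ, ∀ n, |u n| ≤ K := by
    obtain ⟨Ka, hKa⟩ := hu.bddAbove_range
    obtain ⟨Kb, hKb⟩ := hu.bddBelow_range
    refine ⟨max Ka (-Kb), fun n => ?_⟩
    rw [abs_le]
    have h1 := hKb ⟨n, rfl⟩
    have h2 := hKa ⟨n, rfl⟩
    have h3 : -Kb ≤ max Ka (-Kb) := le_max_right _ _
    have h4 : Ka ≤ max Ka (-Kb) := le_max_left _ _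
    exact ⟨by linarith, by linarith⟩
  obtain ⟨K, hK⟩ := hbdd
  apply hγ.2.2 (fun n => Measure.map (fun y => y - u n) Q) (Measure.map (fun y => y - c₀) Q)
    (fun n => shiftM_isDistribution hQ hab (u n)) (shiftM_isDistribution hQ hab c₀)
  · refine ⟨a - K, b + K, fun n => ?_⟩
    have hm : Measurable (fun y : ℝ => y - u n) := by fun_prop
    rw [Measure.map_apply hm measurableSet_Icc]
    have hpre : (fun y : ℝ => y - u n) ⁻¹' (Set.Icc (a - K) (b + K))
        = Set.Icc (a - K + u n) (b + K + u n) := by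
      ext y
      simp only [Set.mem_preimage, Set.mem_Icc]
      constructor <;> intro h <;> constructor <;> linarith [h.1, h.2]
    rw [hpre]
    have := abs_le.mp (hK n)
    exact supp_mono hQ hab (by linarith [this.1, this.2]) (by linarith [this.1, this.2])
  · intro f
    have hint : ∀ c : ℝ, ∫ y, f y ∂(Measure.map (fun y => y - c) Q) = ∫ x, f (x - c) ∂Q := by
      intro c
      have hm : Measurable (fun y : ℝ => y - c) := by fun_prop
      rw [integral_map hm.aemeasurable f.continuous.aestronglyMeasurable]
    simp_rw [hint]
    apply tendsto_integral_of_dominated_convergence (fun _ => ‖f‖)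
    · intro n
      exact (f.continuous.comp (continuous_id.sub continuous_const)).aestronglyMeasurable
    · exact integrable_const _
    · intro n
      exact Filter.Eventually.of_forall (fun x => f.norm_coe_le_norm _)
    · refine Filter.Eventually.of_forall (fun x => ?_)
      exact (f.continuous.tendsto _).comp (tendsto_const_nhds.sub hu)

lemma exists_shift_eq (γ : Measure ℝ → ℝ) (hγ : IsStatistic γ)
    {Q P' : Measure ℝ} {aQ bQ aP bP : ℝ}
    (hQ : IsProbabilityMeasure Q) (habQ : Q (Set.Icc aQ bQ) = 1)
    (hP' : IsProbabilityMeasure P') (habP : P' (Set.Icc aP bP) = 1)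
    (hle : γ P' ≤ γ Q) :
    ∃ c : ℝ, 0 ≤ c ∧ γ (Measure.map (fun y => y - c) Q) = γ P' := by
  haveI := hQ; haveI := hP'
  set C : ℝ := max 0 (bQ - aP) with hC
  set φ : ℝ → ℝ := fun c => γ (Measure.map (fun y => y - c) Q) with hφ
  have hφ0 : φ 0 = γ Q := by
    rw [hφ]
    have : (fun y : ℝ => y - 0) = id := by funext y; simp
    simp only [this, Measure.map_id]
  have hφC : φ C ≤ γ P' := by
    apply hγ.1 P' (Measure.map (fun y => y - C) Q) ⟨hP', aP, bP, habP⟩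
      (shiftM_isDistribution hQ habQ C)
    intro x
    rw [shiftM_Ioi]
    rcases lt_or_ge x aP with hx | hx
    · calc Q (Set.Ioi (x + C)) ≤ 1 := prob_le_one
        _ = P' (Set.Ioi x) := (supp_Ioi_one hP' habP hx).symm
    · have : bQ ≤ x + C := by
        have h1 : bQ - aP ≤ C := le_max_right _ _
        linarith
      rw [supp_Ioi_zero hQ habQ this]
      exact zero_le
  have hcont : ContinuousOn φ (Set.Icc 0 C) :=
    (gamma_shift_continuous γ hγ hQ habQ).continuousOn
  have hmem : γ P' ∈ Set.Icc (φ C) (φ 0) := ⟨hφC, by rw [hφ0]; exact hle⟩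
  obtain ⟨c, hc, hfc⟩ := intermediate_value_Icc' (le_max_left 0 (bQ - aP)) hcont hmem
  exact ⟨c, hc.1, hfc⟩

end Dev8
section Dev9
open Set MeasureTheory

variable {Ω : Type*}

lemma key_forward {G : MeasurableSpace Ω} (P : @Measure Ω G)
    (hP : @IsProbabilityMeasure Ω G P) (hatom : AtomlessOn G P)
    (pref : (Ω → ℝ) → (Ω → ℝ) → Prop) (γ : Measure ℝ → ℝ) (hγ : IsCEStatistic γ)
    (hrep : ∀ X Y : Ω → ℝ, BddMeas G X → BddMeas G Y →
      (pref X Y ↔ γ (@Measure.map Ω ℝ G _ Y P) ≤ γ (@Measure.map Ω ℝ G _ X P)))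
    (hwrd : ∀ X Y : Ω → ℝ, BddMeas G X → BddMeas G Y → Comonotonic X Y → pref X Y → pref Y X →
      ∀ l : ℝ, 0 ≤ l → l ≤ 1 → pref (fun ω => l * X ω + (1 - l) * Y ω) X)
    (Q P' R : Measure ℝ) (hQ : IsDistribution Q) (hP' : IsDistribution P')
    (hR : IsDistribution R) (l : ℝ) (hl0 : 0 ≤ l) (hl1 : l ≤ 1)
    (hq : ∀ β : ℝ, 0 < β → β < 1 →
      distQuantile R β = l * distQuantile Q β + (1 - l) * distQuantile P' β)
    (hle : γ P' ≤ γ Q) : γ P' ≤ γ R := by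
  obtain ⟨hQp, aQ, bQ, habQ⟩ := hQ
  obtain ⟨hPp, aP, bP, habP⟩ := hP'
  obtain ⟨hRp, aR, bR, habR⟩ := hR
  obtain ⟨c, hc0, hcγ⟩ := exists_shift_eq γ hγ.1 hQp habQ hPp habP hle
  obtain ⟨U, hUm, hU01, hUgt, hUge⟩ := exists_uniform P hP hatom
  set X : Ω → ℝ := fun ω => qfun Q bQ (U ω) - c with hXdef
  set Y : Ω → ℝ := fun ω => qfun P' bP (U ω) - 0 with hYdef
  have hmapX : @Measure.map Ω ℝ G _ X P = Measure.map (fun y => y - c) Q :=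
    transform_map P hP hUm hU01 hUgt hUge hQp habQ c
  have hmapY : @Measure.map Ω ℝ G _ Y P = P' := by
    rw [transform_map P hP hUm hU01 hUgt hUge hPp habP 0]
    have : (fun y : ℝ => y - 0) = id := by funext y; simp
    rw [this, Measure.map_id]
  have hXm : @Measurable Ω ℝ G _ X := ((qfun_mono hQp habQ).measurable.comp hUm).sub_const c
  have hYm : @Measurable Ω ℝ G _ Y := ((qfun_mono hPp habP).measurable.comp hUm).sub_const 0
  have hXbdd : BddMeas G X := by
    refine ⟨hXm, max |aQ - c| |bQ - c|, fun ω => abs_le_of_mem_Icc ?_⟩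
    have h := qfun_mem_Icc hQp habQ (U ω)
    exact ⟨by simp only [hXdef]; linarith [h.1], by simp only [hXdef]; linarith [h.2]⟩
  have hYbdd : BddMeas G Y := by
    refine ⟨hYm, max |aP - 0| |bP - 0|, fun ω => abs_le_of_mem_Icc ?_⟩
    have h := qfun_mem_Icc hPp habP (U ω)
    exact ⟨by simp only [hYdef]; linarith [h.1], by simp only [hYdef]; linarith [h.2]⟩
  have hcom : Comonotonic X Y := by
    intro s s'
    simp only [hXdef, hYdef]
    rcases le_total (U s) (U s') with h | h
    · have h1 := qfun_mono hQp habQ h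
      have h2 := qfun_mono hPp habP h
      nlinarith
    · have h1 := qfun_mono hQp habQ h
      have h2 := qfun_mono hPp habP h
      nlinarith
  have he : γ (@Measure.map Ω ℝ G _ Y P) = γ (@Measure.map Ω ℝ G _ X P) := by
    rw [hmapY, hmapX, hcγ]
  have hXY : pref X Y := (hrep X Y hXbdd hYbdd).mpr he.le
  have hYX : pref Y X := (hrep Y X hYbdd hXbdd).mpr he.ge
  obtain ⟨_, MX, hMX⟩ := hXbdd
  obtain ⟨_, MY, hMY⟩ := hYbdd
  set M : ℝ := max MX MY with hM
  have hXb' : ∀ ω, |X ω| ≤ M := fun ω => le_trans (hMX ω) (le_max_left _ _)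
  have hYb' : ∀ ω, |Y ω| ≤ M := fun ω => le_trans (hMY ω) (le_max_right _ _)
  have hZm : @Measurable Ω ℝ G _ (fun ω => l * X ω + (1 - l) * Y ω) :=
    (hXm.const_mul l).add (hYm.const_mul (1 - l))
  have hZbdd : BddMeas G (fun ω => l * X ω + (1 - l) * Y ω) :=
    ⟨hZm, M, abs_combo_le hXb' hYb' hl0 hl1⟩
  have hprefZ : pref (fun ω => l * X ω + (1 - l) * Y ω) X :=
    hwrd X Y ⟨hXm, MX, hMX⟩ ⟨hYm, MY, hMY⟩ hcom hXY hYX l hl0 hl1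
  have hZX : γ (@Measure.map Ω ℝ G _ X P)
      ≤ γ (@Measure.map Ω ℝ G _ (fun ω => l * X ω + (1 - l) * Y ω) P) :=
    (hrep _ X hZbdd ⟨hXm, MX, hMX⟩).mp hprefZ
  -- identify the distribution of the combination with the shifted R
  have hqZ : ∀ β : ℝ, 0 < β → β < 1 →
      distQuantile (@Measure.map Ω ℝ G _ (fun ω => l * X ω + (1 - l) * Y ω) P) β
        = distQuantile R β - l * c := by
    intro β hβ0 hβ1
    rw [distQuantile_map_eq P hZm,
      qtl_comonotone_add P hP X Y M hXb' hYb' hcom l hl0 hl1 hβ0 hβ1,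
      ← distQuantile_map_eq P hXm, ← distQuantile_map_eq P hYm, hmapX, hmapY,
      shiftM_quantile hQp habQ c hβ0 hβ1, hq β hβ0 hβ1]
    ring
  have hZdist : IsDistribution (@Measure.map Ω ℝ G _ (fun ω => l * X ω + (1 - l) * Y ω) P) :=
    isDistribution_map P hP hZbdd
  obtain ⟨hZp, aZ, bZ, habZ⟩ := hZdist
  have hR'dist := shiftM_isDistribution hRp habR (l * c)
  obtain ⟨hR'p, aR', bR', habR'⟩ := hR'dist
  have h1 : (@Measure.map Ω ℝ G _ (fun ω => l * X ω + (1 - l) * Y ω) P)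
      (Set.Icc (min aZ aR') (max bZ bR')) = 1 :=
    supp_mono hZp habZ (min_le_left _ _) (le_max_left _ _)
  have h2 : (Measure.map (fun y => y - l * c) R) (Set.Icc (min aZ aR') (max bZ bR')) = 1 :=
    supp_mono hR'p habR' (min_le_right _ _) (le_max_right _ _)
  have hmapZ : @Measure.map Ω ℝ G _ (fun ω => l * X ω + (1 - l) * Y ω) P
      = Measure.map (fun y => y - l * c) R := by
    apply measure_ext_Ioi hZp hR'p
    apply measure_Ioi_eq_of_qtl_eq hZp hR'p h1 h2
    intro β hβ0 hβ1
    rw [hqZ β hβ0 hβ1, shiftM_quantile hRp habR (l * c) hβ0 hβ1]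
  have hfsd : γ (Measure.map (fun y => y - l * c) R) ≤ γ R :=
    hγ.1.1 R _ ⟨hRp, aR, bR, habR⟩ ⟨hR'p, aR', bR', habR'⟩
      (shiftM_FSDle (mul_nonneg hl0 hc0))
  calc γ P' = γ (@Measure.map Ω ℝ G _ X P) := by rw [hmapX, hcγ]
    _ ≤ γ (@Measure.map Ω ℝ G _ (fun ω => l * X ω + (1 - l) * Y ω) P) := hZX
    _ = γ (Measure.map (fun y => y - l * c) R) := by rw [hmapZ]
    _ ≤ γ R := hfsd

end Dev9
/-- weak risk diversification is characterized by comonotonic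
quasiconcavity of the certainty-equivalent statistic (Proposition `prop:coDi`). -/
theorem stmt10 {Ω : Type*} [F : MeasurableSpace Ω] (G : MeasurableSpace Ω) (hG : G ≤ F)
    (P : @Measure Ω G) (hP : @IsProbabilityMeasure Ω G P) (hatom : AtomlessOn G P)
    (pref : (Ω → ℝ) → (Ω → ℝ) → Prop) (hpref : TotalPreorderOn F pref)
    (hM : AxiomM F pref) (hRC : AxiomRC G P pref) (hSRM : AxiomSRM G P pref)
    (hC : AxiomC F pref)
    (γ : Measure ℝ → ℝ) (hγ : IsCEStatistic γ)
    (hrep : ∀ X Y : Ω → ℝ, BddMeas G X → BddMeas G Y →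
      (pref X Y ↔ γ (@Measure.map Ω ℝ G _ Y P) ≤ γ (@Measure.map Ω ℝ G _ X P))) :
    (∀ X Y : Ω → ℝ, BddMeas G X → BddMeas G Y → Comonotonic X Y → pref X Y → pref Y X →
      ∀ l : ℝ, 0 ≤ l → l ≤ 1 → pref (fun ω => l * X ω + (1 - l) * Y ω) X) ↔
    ComonotonicQuasiconcave γ := by
  constructor
  · intro hwrd Q P' R hQ hP' hR l hl0 hl1 hq
    rcases le_total (γ P') (γ Q) with h | h
    · rw [min_eq_right h]
      exact key_forward P hP hatom pref γ hγ hrep hwrd Q P' R hQ hP' hR l hl0 hl1 hq h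
    · rw [min_eq_left h]
      exact key_forward P hP hatom pref γ hγ hrep hwrd P' Q R hP' hQ hR (1 - l)
        (by linarith) (by linarith)
        (fun β hβ0 hβ1 => by rw [hq β hβ0 hβ1]; ring) h
  · intro hcqc X Y hX hY hcom hXY hYX l hl0 hl1
    exact wrd_of_cqc P hP pref γ hrep hcqc X Y hX hY hcom hXY hYX l hl0 hl1

end
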